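/- In the determinized winning set automaton W(A), supersets can be removed from game states without changing the accepted language: if S, R ∈ G with S ⊊ R, then the game states G and G \ {R} are equivalent, i.e., for all words w over {A,B}, δ_W(G, w) is accepting iff δ_W(G \ {R}, w) is accepting. -/

import Mathlib

/-- Left derivative: `lderiv s T = {v | s :: v ∈ T}`. -/
def lderiv (s : Bool) (T : Set (List Bool)) : Set (List Bool) := {v | s :: v ∈ T}

/-- Winning-set membership. Turn orders are lists over `Bool` with
`false` = A (Alice) and `true` = B (Bob), so that `A < B`. -/
def winW : List Bool → Set (List Bool) → Prop
  | [], T => [] ∈ T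
  | (false :: v), T => winW v (lderiv false T) ∨ winW v (lderiv true T)
  | (true :: v), T => winW v (lderiv false T) ∧ winW v (lderiv true T)

/-- The winning set of a binary language. -/
def winningSet (T : Set (List Bool)) : Set (List Bool) := {w | winW w T}

variable {Q : Type*}

/-- `A`-transition of the winning-set NFA: each state of `S` evolves by an
independently chosen letter. -/
def stepA (M : DFA Bool Q) (S : Set Q) : Set (Set Q) :=
  { T | ∃ f : Q → Bool, T = (fun q => M.step q (f q)) '' S }

/-- `B`-transition of the winning-set NFA: all states evolve by both letters. -/
def stepB (M : DFA Bool Q) (S : Set Q) : Set (Set Q) :=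
  { T | T = {p | ∃ q ∈ S, ∃ b : Bool, p = M.step q b} }

/-- Transition function of the determinized winning-set automaton `W(A)`
on game states, with `false` = A and `true` = B. -/
def gsStep (M : DFA Bool Q) (G : Set (Set Q)) (c : Bool) : Set (Set Q) :=
  ⋃ S ∈ G, (if c then stepB M S else stepA M S)

/-- Iterated transition function `δ_W` of `W(A)` on words. -/
def gsRun (M : DFA Bool Q) (G : Set (Set Q)) (w : List Bool) : Set (Set Q) :=
  w.foldl (gsStep M) G

/-- A game state is accepting iff some of its sets consists of final states. -/
def gsAccept (M : DFA Bool Q) (G : Set (Set Q)) : Prop :=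
  ∃ S ∈ G, S ⊆ M.accept


/-- `G'` dominates `G`: it is contained in `G` and every set of `G` has a
subset in `G'`. -/
def gsDom (G' G : Set (Set Q)) : Prop :=
  G' ⊆ G ∧ ∀ T ∈ G, ∃ T' ∈ G', T' ⊆ T

theorem gsDom_step (M : DFA Bool Q) {G' G : Set (Set Q)} (h : gsDom G' G)
    (c : Bool) : gsDom (gsStep M G' c) (gsStep M G c) := by
  obtain ⟨hsub, hdom⟩ := h
  constructor
  · intro T hT
    simp only [gsStep, Set.mem_iUnion] at hT ⊢
    obtain ⟨U, hU, hTU⟩ := hT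
    exact ⟨U, hsub hU, hTU⟩
  · intro T hT
    simp only [gsStep, Set.mem_iUnion] at hT
    obtain ⟨U, hU, hTU⟩ := hT
    obtain ⟨U', hU', hU'U⟩ := hdom U hU
    cases c with
    | false =>
      simp only [if_neg Bool.false_ne_true, stepA, Set.mem_setOf_eq] at hTU
      obtain ⟨f, rfl⟩ := hTU
      refine ⟨(fun q => M.step q (f q)) '' U', ?_, Set.image_mono hU'U⟩
      simp only [gsStep, Set.mem_iUnion]
      exact ⟨U', hU', by simp [stepA]; exact ⟨f, rfl⟩⟩
    | true =>
      simp only [if_pos rfl, stepB, Set.mem_setOf_eq] at hTU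
      subst hTU
      refine ⟨{p | ∃ q ∈ U', ∃ b : Bool, p = M.step q b}, ?_, ?_⟩
      · simp only [gsStep, Set.mem_iUnion]
        exact ⟨U', hU', by simp [stepB]⟩
      · rintro p ⟨q, hq, b, rfl⟩
        exact ⟨q, hU'U hq, b, rfl⟩

theorem gsDom_run (M : DFA Bool Q) {G' G : Set (Set Q)} (h : gsDom G' G)
    (w : List Bool) : gsDom (gsRun M G' w) (gsRun M G w) := by
  induction w generalizing G' G with
  | nil => exact h
  | cons c w ih => exact ih (gsDom_step M h c)

theorem gsDom_accept (M : DFA Bool Q) {G' G : Set (Set Q)} (h : gsDom G' G) :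
    gsAccept M G ↔ gsAccept M G' := by
  constructor
  · rintro ⟨T, hT, hTacc⟩
    obtain ⟨T', hT', hsub⟩ := h.2 T hT
    exact ⟨T', hT', hsub.trans hTacc⟩
  · rintro ⟨T, hT, hTacc⟩
    exact ⟨T, h.1 hT, hTacc⟩

/-- proper supersets can be removed from game states. -/
theorem gs_remove_superset (M : DFA Bool Q) (G : Set (Set Q)) (S R : Set Q)
    (hS : S ∈ G) (hR : R ∈ G) (hSR : S ⊂ R) :
    ∀ w : List Bool,
      gsAccept M (gsRun M G w) ↔ gsAccept M (gsRun M (G \ {R}) w) := by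
  intro w
  have hdom : gsDom (G \ {R}) G := by
    constructor
    · exact Set.diff_subset
    · intro T hT
      by_cases hTR : T = R
      · subst hTR
        exact ⟨S, ⟨hS, fun hSR' => hSR.2 (le_of_eq (Set.mem_singleton_iff.mp hSR').symm)⟩, hSR.1⟩
      · exact ⟨T, ⟨hT, hTR⟩, le_refl T⟩
  exact gsDom_accept M (gsDom_run M hdom w)
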